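/- Let M ≥ 1, η > 0, C > 0. Let w ∈ ℝ^M with w_i ≥ 0 for all i and Σ_{i=1}^M w_i = 1, and let g ∈ ℝ^M with |g_i| ≤ C for all i. Define the mirror-descent update w'_i := w_i·exp(−η g_i) / Σ_{k=1}^M w_k·exp(−η g_k). Then: (a) w'_i ≥ 0 for all i and Σ_i w'_i = 1; (b) w'_i ≥ w_i·exp(−2ηC) for all i; (c) for every t with 1 − exp(−2ηC) < t ≤ 1, the vector h := (w' − (1−t)·w)/t satisfies h_i ≥ 0 for all i and Σ_i h_i = 1; consequently the mirror-descent update is the convex combination w' = (1−t)·w + t·h of the previous iterate with a point h of the probability simplex. -/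

import Mathlib

/-- Mirror descent on the simplex as a Tan–HWG observable scheme: the
multiplicative-weights update with bounded gradients (a) stays in the probability
simplex, (b) satisfies the lower bound `w'_i ≥ w_i·e^{−2ηC}`, and (c) for every
contraction factor `t` with `1 − e^{−2ηC} < t ≤ 1`, is the convex combination
`w' = (1−t)·w + t·h` with `h` in the probability simplex. -/
theorem stmt_12
    (M : ℕ) (hM : 1 ≤ M) (η C : ℝ) (hη : 0 < η) (hC : 0 < C)
    (w : Fin M → ℝ) (hw0 : ∀ i, 0 ≤ w i) (hw1 : ∑ i, w i = 1)
    (g : Fin M → ℝ) (hg : ∀ i, |g i| ≤ C)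
    (w' : Fin M → ℝ)
    (hw' : ∀ i, w' i = w i * Real.exp (-η * g i)
      / ∑ k, w k * Real.exp (-η * g k)) :
    ((∀ i, 0 ≤ w' i) ∧ ∑ i, w' i = 1) ∧
    (∀ i, w' i ≥ w i * Real.exp (-(2 * η * C))) ∧
    (∀ t : ℝ, 1 - Real.exp (-(2 * η * C)) < t → t ≤ 1 →
      (∀ i, 0 ≤ (w' i - (1 - t) * w i) / t) ∧
      (∑ i, (w' i - (1 - t) * w i) / t = 1) ∧
      (∀ i, w' i = (1 - t) * w i + t * ((w' i - (1 - t) * w i) / t))) := by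
  set S : ℝ := ∑ k, w k * Real.exp (-η * g k) with hS
  have hterm : ∀ k : Fin M, 0 ≤ w k * Real.exp (-η * g k) := fun k =>
    mul_nonneg (hw0 k) (Real.exp_pos _).le
  -- S > 0
  have hex : ∃ i, 0 < w i := by
    by_contra h
    push_neg at h
    have : ∑ i, w i = 0 := Finset.sum_eq_zero fun i _ => le_antisymm (h i) (hw0 i)
    rw [hw1] at this; norm_num at this
  obtain ⟨i0, hi0⟩ := hex
  have hSpos : 0 < S := by
    have : 0 < w i0 * Real.exp (-η * g i0) := mul_pos hi0 (Real.exp_pos _)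
    exact lt_of_lt_of_le this (Finset.single_le_sum (fun k _ => hterm k) (Finset.mem_univ i0))
  -- S ≤ exp (ηC)
  have hSle : S ≤ Real.exp (η * C) := by
    calc S ≤ ∑ k, w k * Real.exp (η * C) := by
          apply Finset.sum_le_sum
          intro k _
          apply mul_le_mul_of_nonneg_left _ (hw0 k)
          apply Real.exp_le_exp.2
          have := (abs_le.1 (hg k)).1
          nlinarith
      _ = Real.exp (η * C) := by rw [← Finset.sum_mul, hw1, one_mul]
  have hnn : ∀ i, 0 ≤ w' i := fun i => by
    rw [hw' i]; exact div_nonneg (hterm i) hSpos.le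
  have hsum : ∑ i, w' i = 1 := by
    have : ∑ i, w' i = (∑ i, w i * Real.exp (-η * g i)) / S := by
      rw [Finset.sum_div]; exact Finset.sum_congr rfl fun i _ => hw' i
    rw [this, ← hS, div_self hSpos.ne']
  have hlb : ∀ i, w' i ≥ w i * Real.exp (-(2 * η * C)) := by
    intro i
    rw [hw' i, ge_iff_le, le_div_iff₀ hSpos]
    have h1 : Real.exp (-(η * C)) ≤ Real.exp (-η * g i) := by
      apply Real.exp_le_exp.2
      have := (abs_le.1 (hg i)).2
      nlinarith
    calc w i * Real.exp (-(2 * η * C)) * S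
        ≤ w i * Real.exp (-(2 * η * C)) * Real.exp (η * C) := by
          apply mul_le_mul_of_nonneg_left hSle
          exact mul_nonneg (hw0 i) (Real.exp_pos _).le
      _ = w i * Real.exp (-(η * C)) := by
          rw [mul_assoc, ← Real.exp_add]; ring_nf
      _ ≤ w i * Real.exp (-η * g i) := mul_le_mul_of_nonneg_left h1 (hw0 i)
  refine ⟨⟨hnn, hsum⟩, hlb, ?_⟩
  intro t ht1 ht2
  have hEpos : 0 < Real.exp (-(2 * η * C)) := Real.exp_pos _
  have hElt : Real.exp (-(2 * η * C)) < 1 := by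
    rw [Real.exp_lt_one_iff]; nlinarith
  have htpos : 0 < t := by linarith
  have hnum : ∀ i, 0 ≤ w' i - (1 - t) * w i := by
    intro i
    have : (1 - t) * w i ≤ Real.exp (-(2 * η * C)) * w i := by
      rcases eq_or_lt_of_le (hw0 i) with h | h
      · rw [← h]; simp
      · nlinarith
    have := hlb i
    nlinarith
  refine ⟨fun i => div_nonneg (hnum i) htpos.le, ?_, fun i => by field_simp; ring⟩
  rw [← Finset.sum_div, Finset.sum_sub_distrib, hsum, ← Finset.mul_sum, hw1]
  field_simp
  ring
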